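/- Let C_1, ..., C_k be strictly convex, nonempty closed convex sets in R^d that are not collinear (no single line meets all of them). Then D(x) = Σ_j dist(x, C_j) is strictly convex. -/

import Mathlib

open Metric

private lemma infDist_lt_dist_of_interior {E : Type*} [NormedAddCommGroup E]
    [NormedSpace ℝ E] {s : Set E} {w z : E} (hw : w ∈ interior s) (hz : z ≠ w) :
    infDist z s < dist z w := by
  obtain ⟨ε, hε, hball⟩ := Metric.isOpen_iff.1 isOpen_interior w hw
  have hr : 0 < dist z w := dist_pos.2 hz
  set r := dist z w with hrdef
  set c : ℝ := min (ε / (2 * r)) (1 / 2) with hc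
  have hc0 : 0 < c := lt_min (div_pos hε (by positivity)) (by norm_num)
  have hc1 : c < 1 := lt_of_le_of_lt (min_le_right _ _) (by norm_num)
  have hw' : w + c • (z - w) ∈ s := by
    apply interior_subset
    apply hball
    rw [Metric.mem_ball, dist_eq_norm]
    have h1 : ‖w + c • (z - w) - w‖ = c * r := by
      rw [add_sub_cancel_left, norm_smul, Real.norm_of_nonneg hc0.le, hrdef,
        dist_eq_norm, norm_sub_rev]
    rw [h1]
    calc c * r ≤ (ε / (2 * r)) * r :=
          mul_le_mul_of_nonneg_right (min_le_left _ _) hr.le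
      _ = ε / 2 := by field_simp
      _ < ε := by linarith
  calc infDist z s ≤ dist z (w + c • (z - w)) := infDist_le_dist_of_mem hw'
    _ = (1 - c) * r := by
        rw [dist_eq_norm]
        have h2 : z - (w + c • (z - w)) = (1 - c) • (z - w) := by module
        rw [h2, norm_smul, Real.norm_of_nonneg (by linarith), hrdef, dist_eq_norm]
    _ < r := by nlinarith

theorem D_strictConvex_of_strictConvex_noncollinear
    {d k : ℕ} (C : Fin k → Set (EuclideanSpace ℝ (Fin d)))
    (hne : ∀ j, (C j).Nonempty) (hcl : ∀ j, IsClosed (C j))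
    (hsc : ∀ j, StrictConvex ℝ (C j))
    (hnoncol : ¬ ∃ (p v : EuclideanSpace ℝ (Fin d)), v ≠ 0 ∧
      ∀ j, ∃ t : ℝ, p + t • v ∈ C j) :
    StrictConvexOn ℝ Set.univ
      (fun x : EuclideanSpace ℝ (Fin d) => ∑ j, infDist x (C j)) := by
  push_neg at hnoncol
  constructor
  · exact convex_univ
  intro x _ y _ hxy a b ha hb hab
  obtain ⟨j0, hj0⟩ := hnoncol x (y - x) (sub_ne_zero.2 (Ne.symm hxy))
  set z : EuclideanSpace ℝ (Fin d) := a • x + b • y with hz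
  have hb1 : a = 1 - b := by linarith
  have hzline : z = x + b • (y - x) := by rw [hz, hb1]; module
  have proj : ∀ j, ∃ p ∈ C j, infDist x (C j) = dist x p := fun j =>
    (hcl j).exists_infDist_eq_dist (hne j) x
  have proj' : ∀ j, ∃ p ∈ C j, infDist y (C j) = dist y p := fun j =>
    (hcl j).exists_infDist_eq_dist (hne j) y
  have hdistw : ∀ px py : EuclideanSpace ℝ (Fin d),
      dist z (a • px + b • py) = ‖a • (x - px) + b • (y - py)‖ := by
    intro px py
    rw [dist_eq_norm, hz]
    congr 1
    module
  have hnorms : ∀ (j : Fin k) (px py : EuclideanSpace ℝ (Fin d)),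
      infDist x (C j) = dist x px → infDist y (C j) = dist y py →
      ‖a • (x - px)‖ + ‖b • (y - py)‖
        = a * infDist x (C j) + b * infDist y (C j) := by
    intro j px py hdx hdy
    rw [norm_smul, norm_smul, Real.norm_of_nonneg ha.le, Real.norm_of_nonneg hb.le,
      ← dist_eq_norm, ← dist_eq_norm, hdx, hdy]
  -- weak bound for every j
  have hle : ∀ j, infDist z (C j) ≤ a * infDist x (C j) + b * infDist y (C j) := by
    intro j
    obtain ⟨px, hpx, hdx⟩ := proj j
    obtain ⟨py, hpy, hdy⟩ := proj' j
    have hw : a • px + b • py ∈ C j := (hsc j).convex hpx hpy ha.le hb.le hab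
    calc infDist z (C j) ≤ dist z (a • px + b • py) := infDist_le_dist_of_mem hw
      _ = ‖a • (x - px) + b • (y - py)‖ := hdistw px py
      _ ≤ ‖a • (x - px)‖ + ‖b • (y - py)‖ := norm_add_le _ _
      _ = a * infDist x (C j) + b * infDist y (C j) := hnorms j px py hdx hdy
  -- strict bound for j0
  have hlt : infDist z (C j0) < a * infDist x (C j0) + b * infDist y (C j0) := by
    obtain ⟨px, hpx, hdx⟩ := proj j0
    obtain ⟨py, hpy, hdy⟩ := proj' j0
    have hx0 : x - px ≠ 0 := by
      intro h
      exact hj0 0 (by rw [zero_smul, add_zero, show x = px from sub_eq_zero.1 h]; exact hpx)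
    have hy0 : y - py ≠ 0 := by
      intro h
      exact hj0 1 (by rw [one_smul, add_sub_cancel, show y = py from sub_eq_zero.1 h]; exact hpy)
    by_cases hpp : px = py
    · -- common projection point; strict triangle inequality
      subst hpp
      have hray : ¬ SameRay ℝ (a • (x - px)) (b • (y - px)) := by
        intro hray
        obtain ⟨r₁, r₂, hr₁, hr₂, hr⟩ := hray.exists_pos
          (smul_ne_zero ha.ne' hx0) (smul_ne_zero hb.ne' hy0)
        rw [smul_smul, smul_smul] at hr
        set s := r₁ * a with hs
        set t := r₂ * b with ht
        have hs0 : 0 < s := mul_pos hr₁ ha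
        have ht0 : 0 < t := mul_pos hr₂ hb
        have hst : s ≠ t := by
          intro h
          apply hxy
          rw [← h] at hr
          have h1 : x - px = y - px := smul_right_injective _ hs0.ne' hr
          exact sub_left_injective h1
        have hst' : s - t ≠ 0 := sub_ne_zero.2 hst
        have hts' : t - s ≠ 0 := sub_ne_zero.2 (Ne.symm hst)
        have hE : (s - t) • px = s • x - t • y := by
          linear_combination (norm := module) -hr
        have hcoef : (s - t) * (t / (t - s)) = -t := by field_simp; ring
        have key : x + (t / (t - s)) • (y - x) = px := by
          apply smul_right_injective (EuclideanSpace ℝ (Fin d)) hst'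
          show (s - t) • (x + (t / (t - s)) • (y - x)) = (s - t) • px
          rw [hE, smul_add, smul_smul, hcoef]
          module
        exact hj0 (t / (t - s)) (key ▸ hpx)
      have hstrict : ‖a • (x - px) + b • (y - px)‖ < ‖a • (x - px)‖ + ‖b • (y - px)‖ :=
        not_sameRay_iff_norm_add_lt.1 hray
      have hpxconv : (px : EuclideanSpace ℝ (Fin d)) = a • px + b • px := by
        rw [← add_smul, hab, one_smul]
      calc infDist z (C j0) ≤ dist z px := infDist_le_dist_of_mem hpx
        _ = ‖a • (x - px) + b • (y - px)‖ := by rw [← hdistw px px, ← hpxconv]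
        _ < ‖a • (x - px)‖ + ‖b • (y - px)‖ := hstrict
        _ = a * infDist x (C j0) + b * infDist y (C j0) := hnorms j0 px px hdx hdy
    · -- distinct projections: convex combination lies in the interior
      have hw : a • px + b • py ∈ interior (C j0) := hsc j0 hpx hpy hpp ha hb hab
      have hzw : z ≠ a • px + b • py := by
        intro h
        apply hj0 b
        rw [← hzline, h]
        exact interior_subset hw
      calc infDist z (C j0) < dist z (a • px + b • py) :=
            infDist_lt_dist_of_interior hw hzw
        _ = ‖a • (x - px) + b • (y - py)‖ := hdistw px py
        _ ≤ ‖a • (x - px)‖ + ‖b • (y - py)‖ := norm_add_le _ _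
        _ = a * infDist x (C j0) + b * infDist y (C j0) := hnorms j0 px py hdx hdy
  calc ∑ j, infDist z (C j)
      < ∑ j, (a * infDist x (C j) + b * infDist y (C j)) :=
        Finset.sum_lt_sum (fun j _ => hle j) ⟨j0, Finset.mem_univ _, hlt⟩
    _ = a • ∑ j, infDist x (C j) + b • ∑ j, infDist y (C j) := by
        rw [Finset.sum_add_distrib, ← Finset.mul_sum, ← Finset.mul_sum]
        simp [smul_eq_mul]
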